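/- Let X₁, X₂ and Y be Banach spaces, let X = X₁ ⊕_1 X₂, and for j = 1, 2 let Γ_j be a boundary for X_j contained in the unit sphere of X_j*. Let Γ ⊆ S(X*) consist of all functionals of the form (x₁, x₂) ↦ x₁*(x₁) with x₁* ∈ Γ₁ together with all functionals of the form (x₁, x₂) ↦ x₂*(x₂) with x₂* ∈ Γ₂. If a bounded linear operator T : X → Y is rigidly narrow with respect to Γ, then the restrictions T₁ and T₂ of T are rigid strong Daugavet operators. -/

import Mathlib

/-- A bounded linear operator `T : X → Y` is a *rigid strong Daugavet operator* if for
every `x, y` in the unit sphere of `X` there is `z` in the unit sphere with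
`‖x + z‖ = 2` and `T (y - z) = 0`. -/
def IsRigidStrongDaugavet {X Y : Type*} [NormedAddCommGroup X] [NormedSpace ℝ X]
    [NormedAddCommGroup Y] [NormedSpace ℝ Y] (T : X →L[ℝ] Y) : Prop :=
  ∀ x y : X, ‖x‖ = 1 → ‖y‖ = 1 →
    ∃ z : X, ‖z‖ = 1 ∧ ‖x + z‖ = 2 ∧ T (y - z) = 0

/-- `T` is *rigidly narrow with respect to* a set `Γ` of functionals if for every
`x, y` in the unit sphere and every `g ∈ Γ` there is `z` in the unit sphere with
`‖x + z‖ = 2`, `T (y - z) = 0` and `g (y - z) = 0`. -/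
def IsRigidlyNarrowWrt {X Y : Type*} [NormedAddCommGroup X] [NormedSpace ℝ X]
    [NormedAddCommGroup Y] [NormedSpace ℝ Y] (T : X →L[ℝ] Y)
    (Γ : Set (X →L[ℝ] ℝ)) : Prop :=
  ∀ x y : X, ‖x‖ = 1 → ‖y‖ = 1 → ∀ g ∈ Γ,
    ∃ z : X, ‖z‖ = 1 ∧ ‖x + z‖ = 2 ∧ T (y - z) = 0 ∧ g (y - z) = 0


lemma norm1_eq_add {α β : Type*} [NormedAddCommGroup α] [NormedAddCommGroup β]
    (f : WithLp 1 (α × β)) : ‖f‖ = ‖f.fst‖ + ‖f.snd‖ := by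
  have := WithLp.prod_norm_eq_add (p := 1) (by norm_num) f
  simpa using this

/-- Let `X = X₁ ⊕₁ X₂`, let `Γⱼ ⊆ S(Xⱼ*)` be boundaries for `Xⱼ`, and let `Γ` consist
of the functionals `(x₁, x₂) ↦ f (x₁)` for `f ∈ Γ₁` and `(x₁, x₂) ↦ f (x₂)` for
`f ∈ Γ₂`. If `T : X → Y` is rigidly narrow with respect to `Γ`, then the restrictions
`T₁` and `T₂` of `T` are rigid strong Daugavet operators. -/
theorem restrictions_rigidStrongDaugavet_of_rigidlyNarrow_oneSum
    {X₁ X₂ Y : Type*}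
    [NormedAddCommGroup X₁] [NormedSpace ℝ X₁] [CompleteSpace X₁]
    [NormedAddCommGroup X₂] [NormedSpace ℝ X₂] [CompleteSpace X₂]
    [NormedAddCommGroup Y] [NormedSpace ℝ Y] [CompleteSpace Y]
    (Γ₁ : Set (X₁ →L[ℝ] ℝ)) (Γ₂ : Set (X₂ →L[ℝ] ℝ))
    (hΓ₁sphere : ∀ f ∈ Γ₁, ‖f‖ = 1)
    (hΓ₂sphere : ∀ f ∈ Γ₂, ‖f‖ = 1)
    (hΓ₁bdry : ∀ x₁ : X₁, ∃ f ∈ Γ₁, f x₁ = ‖x₁‖)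
    (hΓ₂bdry : ∀ x₂ : X₂, ∃ f ∈ Γ₂, f x₂ = ‖x₂‖)
    (Γ : Set (WithLp 1 (X₁ × X₂) →L[ℝ] ℝ))
    (hΓ : Γ = {g | ∃ f ∈ Γ₁, g = f.comp ((ContinuousLinearMap.fst ℝ X₁ X₂).comp
            (WithLp.prodContinuousLinearEquiv 1 ℝ X₁ X₂ : WithLp 1 (X₁ × X₂) →L[ℝ] X₁ × X₂))} ∪
        {g | ∃ f ∈ Γ₂, g = f.comp ((ContinuousLinearMap.snd ℝ X₁ X₂).comp
            (WithLp.prodContinuousLinearEquiv 1 ℝ X₁ X₂ : WithLp 1 (X₁ × X₂) →L[ℝ] X₁ × X₂))})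
    (T : WithLp 1 (X₁ × X₂) →L[ℝ] Y)
    (T₁ : X₁ →L[ℝ] Y) (T₂ : X₂ →L[ℝ] Y)
    (hT₁ : ∀ x₁ : X₁, T₁ x₁ = T ((WithLp.prodContinuousLinearEquiv 1 ℝ X₁ X₂).symm (x₁, 0)))
    (hT₂ : ∀ x₂ : X₂, T₂ x₂ = T ((WithLp.prodContinuousLinearEquiv 1 ℝ X₁ X₂).symm (0, x₂)))
    (hT : IsRigidlyNarrowWrt T Γ) :
    IsRigidStrongDaugavet T₁ ∧ IsRigidStrongDaugavet T₂ := by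
  set e := WithLp.prodContinuousLinearEquiv 1 ℝ X₁ X₂ with he
  constructor
  · intro x y hx hy
    obtain ⟨f, hfΓ, hfy⟩ := hΓ₁bdry y
    rw [hy] at hfy
    set g := f.comp ((ContinuousLinearMap.fst ℝ X₁ X₂).comp
        (e : WithLp 1 (X₁ × X₂) →L[ℝ] X₁ × X₂)) with hg
    have hgΓ : g ∈ Γ := by rw [hΓ]; exact Or.inl ⟨f, hfΓ, rfl⟩
    set xh : WithLp 1 (X₁ × X₂) := e.symm (x, 0) with hxh
    set yh : WithLp 1 (X₁ × X₂) := e.symm (y, 0) with hyh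
    have hxh1 : xh.fst = x := rfl
    have hxh2 : xh.snd = 0 := rfl
    have hyh1 : yh.fst = y := rfl
    have hyh2 : yh.snd = 0 := rfl
    have hnx : ‖xh‖ = 1 := by rw [norm1_eq_add, hxh1, hxh2, hx]; simp
    have hny : ‖yh‖ = 1 := by rw [norm1_eq_add, hyh1, hyh2, hy]; simp
    obtain ⟨z, hz1, hz2, hz3, hz4⟩ := hT xh yh hnx hny g hgΓ
    have hg4 : f (y - z.fst) = 0 := by
      have : g (yh - z) = f ((yh - z).fst) := rfl
      rw [this, WithLp.sub_fst, hyh1] at hz4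
      exact hz4
    have hfz : f z.fst = 1 := by
      rw [map_sub, hfy] at hg4; linarith
    have hz1' : ‖z.fst‖ + ‖z.snd‖ = 1 := by rw [← norm1_eq_add, hz1]
    have hle : (1 : ℝ) ≤ ‖z.fst‖ := by
      calc (1 : ℝ) = f z.fst := hfz.symm
        _ ≤ ‖f z.fst‖ := le_abs_self _
        _ ≤ ‖f‖ * ‖z.fst‖ := f.le_opNorm _
        _ = ‖z.fst‖ := by rw [hΓ₁sphere f hfΓ, one_mul]
    have hzf : ‖z.fst‖ = 1 := le_antisymm (by linarith [norm_nonneg z.snd]) hle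
    have hzs : z.snd = 0 := by
      have : ‖z.snd‖ = 0 := by linarith
      simpa using this
    refine ⟨z.fst, hzf, ?_, ?_⟩
    · have := norm1_eq_add (xh + z)
      rw [WithLp.add_fst, WithLp.add_snd, hxh1, hxh2, hzs, hz2] at this
      simpa using this.symm
    · rw [hT₁]
      have hcomp : yh - z = e.symm (y - z.fst, 0) := by
        have h1 : (yh - z).fst = y - z.fst := by rw [WithLp.sub_fst, hyh1]
        have h2 : (yh - z).snd = 0 := by rw [WithLp.sub_snd, hyh2, hzs, sub_zero]
        exact congrArg (WithLp.toLp 1) (Prod.ext h1 h2 : (yh - z).ofLp = (e.symm (y - z.fst, 0)).ofLp)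
      rw [← hcomp]
      exact hz3
  · intro x y hx hy
    obtain ⟨f, hfΓ, hfy⟩ := hΓ₂bdry y
    rw [hy] at hfy
    set g := f.comp ((ContinuousLinearMap.snd ℝ X₁ X₂).comp
        (e : WithLp 1 (X₁ × X₂) →L[ℝ] X₁ × X₂)) with hg
    have hgΓ : g ∈ Γ := by rw [hΓ]; exact Or.inr ⟨f, hfΓ, rfl⟩
    set xh : WithLp 1 (X₁ × X₂) := e.symm (0, x) with hxh
    set yh : WithLp 1 (X₁ × X₂) := e.symm (0, y) with hyh
    have hxh1 : xh.fst = 0 := rfl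
    have hxh2 : xh.snd = x := rfl
    have hyh1 : yh.fst = 0 := rfl
    have hyh2 : yh.snd = y := rfl
    have hnx : ‖xh‖ = 1 := by rw [norm1_eq_add, hxh1, hxh2, hx]; simp
    have hny : ‖yh‖ = 1 := by rw [norm1_eq_add, hyh1, hyh2, hy]; simp
    obtain ⟨z, hz1, hz2, hz3, hz4⟩ := hT xh yh hnx hny g hgΓ
    have hg4 : f (y - z.snd) = 0 := by
      have : g (yh - z) = f ((yh - z).snd) := rfl
      rw [this, WithLp.sub_snd, hyh2] at hz4
      exact hz4
    have hfz : f z.snd = 1 := by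
      rw [map_sub, hfy] at hg4; linarith
    have hz1' : ‖z.fst‖ + ‖z.snd‖ = 1 := by rw [← norm1_eq_add, hz1]
    have hle : (1 : ℝ) ≤ ‖z.snd‖ := by
      calc (1 : ℝ) = f z.snd := hfz.symm
        _ ≤ ‖f z.snd‖ := le_abs_self _
        _ ≤ ‖f‖ * ‖z.snd‖ := f.le_opNorm _
        _ = ‖z.snd‖ := by rw [hΓ₂sphere f hfΓ, one_mul]
    have hzs : ‖z.snd‖ = 1 := le_antisymm (by linarith [norm_nonneg z.fst]) hle
    have hzf : z.fst = 0 := by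
      have : ‖z.fst‖ = 0 := by linarith
      simpa using this
    refine ⟨z.snd, hzs, ?_, ?_⟩
    · have := norm1_eq_add (xh + z)
      rw [WithLp.add_fst, WithLp.add_snd, hxh1, hxh2, hzf, hz2] at this
      simpa using this.symm
    · rw [hT₂]
      have hcomp : yh - z = e.symm (0, y - z.snd) := by
        have h1 : (yh - z).fst = 0 := by rw [WithLp.sub_fst, hyh1, hzf, sub_zero]
        have h2 : (yh - z).snd = y - z.snd := by rw [WithLp.sub_snd, hyh2]
        exact congrArg (WithLp.toLp 1) (Prod.ext h1 h2 : (yh - z).ofLp = (e.symm (0, y - z.snd)).ofLp)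
      rw [← hcomp]
      exact hz3
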